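/- arXiv:0907.0693 — 3 statements merged into one kernel-verified Lean document; each statement's English description precedes it below -/
import Mathlib

section
/- Let t_0 < t_1 < ... < t_N be distinct real numbers, N ≥ 1, and let 𝒟_N be the N×N Lagrange differentiation matrix built on the nodes t_1, ..., t_N. Let T = diag(t_1, ..., t_N). Then for each integer m with 0 ≤ m ≤ N−1, the vector v^{(m)} with entries v^{(m)}_j = (t_j - t_0)^m satisfies (T - t_0 I_N) 𝒟_N v^{(m)} = m · v^{(m)}. -/
open Finset Matrix

/-- The Lagrange differentiation matrix on nodes `t`. -/
noncomputable def lagrangeD {ι : Type*} [Fintype ι] [DecidableEq ι] (t : ι → ℝ) :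
    Matrix ι ι ℝ :=
  Matrix.of fun j k =>
    if j = k then ∑ l ∈ Finset.univ.erase j, (t j - t l)⁻¹
    else (∏ l ∈ Finset.univ.erase j, (t j - t l)) /
      ((t j - t k) * ∏ l ∈ Finset.univ.erase k, (t k - t l))

open Polynomial

lemma basis_eq_C_mul_nodal {ι : Type*} [Fintype ι] [DecidableEq ι] (v : ι → ℝ) (k : ι) :
    Lagrange.basis Finset.univ v k =
      C (∏ l ∈ Finset.univ.erase k, (v k - v l)⁻¹) *
        Lagrange.nodal (Finset.univ.erase k) v := by
  simp_rw [Lagrange.basis, Lagrange.basisDivisor, Lagrange.nodal, Finset.prod_mul_distrib,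
    map_prod]

lemma eval_derivative_basis {ι : Type*} [Fintype ι] [DecidableEq ι] (v : ι → ℝ)
    (hv : Function.Injective v) (j k : ι) :
    Polynomial.eval (v j) (Polynomial.derivative (Lagrange.basis Finset.univ v k)) =
      lagrangeD v j k := by
  rw [basis_eq_C_mul_nodal, derivative_C_mul, Lagrange.derivative_nodal, eval_mul, eval_C,
    eval_finset_sum]
  simp only [Lagrange.eval_nodal]
  unfold lagrangeD
  by_cases hjk : j = k
  · subst hjk
    rw [Matrix.of_apply, if_pos rfl, Finset.mul_sum]
    refine Finset.sum_congr rfl fun l hl => ?_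
    rw [← Finset.mul_prod_erase _ (fun m => (v j - v m)⁻¹) hl, mul_assoc,
      ← Finset.prod_mul_distrib]
    have : ∀ m ∈ (Finset.univ.erase j).erase l, (v j - v m)⁻¹ * (v j - v m) = 1 := by
      intro m hm
      have hmj : m ≠ j := Finset.ne_of_mem_erase (Finset.mem_of_mem_erase hm)
      exact inv_mul_cancel₀ (sub_ne_zero.2 (fun h => hmj (hv h.symm)))
    rw [Finset.prod_congr rfl this, Finset.prod_const_one, mul_one]
  · rw [Matrix.of_apply, if_neg hjk]
    have hjek : j ∈ Finset.univ.erase k := Finset.mem_erase.2 ⟨hjk, Finset.mem_univ _⟩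
    have hsum : ∑ l ∈ Finset.univ.erase k, ∏ m ∈ (Finset.univ.erase k).erase l, (v j - v m) =
        ∏ m ∈ (Finset.univ.erase k).erase j, (v j - v m) := by
      refine Finset.sum_eq_single j (fun l hl hlj => ?_) (fun h => absurd hjek h)
      refine Finset.prod_eq_zero (Finset.mem_erase.2 ⟨fun h => hlj h.symm, hjek⟩) ?_
      simp
    rw [hsum]
    have hW : (∏ l ∈ Finset.univ.erase k, (v k - v l)) ≠ 0 := by
      refine Finset.prod_ne_zero_iff.2 fun l hl => ?_
      have : l ≠ k := Finset.ne_of_mem_erase hl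
      exact sub_ne_zero.2 fun h => this (hv h.symm)
    have hvjk : v j - v k ≠ 0 := sub_ne_zero.2 fun h => hjk (hv h)
    have hP : (∏ l ∈ Finset.univ.erase j, (v j - v l)) =
        (v j - v k) * ∏ m ∈ (Finset.univ.erase k).erase j, (v j - v m) := by
      rw [show ((Finset.univ.erase k).erase j : Finset ι) = (Finset.univ.erase j).erase k from
        Finset.erase_right_comm]
      exact (Finset.mul_prod_erase (Finset.univ.erase j) (fun l => v j - v l)
        (Finset.mem_erase.2 ⟨fun h => hjk h.symm, Finset.mem_univ _⟩)).symm
    rw [hP, Finset.prod_inv_distrib, mul_div_mul_left _ _ hvjk, div_eq_inv_mul]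

lemma deriv_eval {N : ℕ} (u : Fin N → ℝ) (hu : Function.Injective u) (c : ℝ) (m : ℕ)
    (hm : m < N) (j : Fin N) :
    ∑ k, (u k - c) ^ m * Polynomial.eval (u j)
        (Polynomial.derivative (Lagrange.basis Finset.univ u k)) =
      (m : ℝ) * (u j - c) ^ (m - 1) := by
  have hinj : Set.InjOn u (Finset.univ : Finset (Fin N)) := hu.injOn
  set f : ℝ[X] := (X - C c) ^ m with hf
  have hdeg : f.degree < (Finset.univ : Finset (Fin N)).card := by
    rw [hf, degree_pow, degree_X_sub_C, Finset.card_univ, Fintype.card_fin]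
    simpa using (Nat.cast_lt (α := WithBot ℕ)).2 hm
  have hfi := Lagrange.eq_interpolate hinj hdeg
  have heval : ∀ k, Polynomial.eval (u k) f = (u k - c) ^ m := by
    intro k; simp [hf]
  have h1 : Polynomial.eval (u j) (Polynomial.derivative f) =
      (m : ℝ) * (u j - c) ^ (m - 1) := by
    rw [hf, derivative_pow]
    simp
  calc ∑ k, (u k - c) ^ m *
        Polynomial.eval (u j) (Polynomial.derivative (Lagrange.basis Finset.univ u k))
      = Polynomial.eval (u j) (Polynomial.derivative f) := by
        conv_rhs => rw [hfi]
        rw [Lagrange.interpolate_apply, derivative_sum, eval_finset_sum]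
        refine Finset.sum_congr rfl fun k _ => ?_
        rw [derivative_mul, derivative_C, zero_mul, zero_add, eval_mul, eval_C, heval]
    _ = (m : ℝ) * (u j - c) ^ (m - 1) := h1

/-- `(T - t₀ I) 𝒟_N` acts on the vector of powers `(t_j - t₀)^m` as multiplication by `m`. -/
theorem stmt_4 (N : ℕ) (hN : 1 ≤ N) (t : Fin (N + 1) → ℝ) (ht : StrictMono t)
    (m : ℕ) (hm : m ≤ N - 1) :
    ((Matrix.diagonal fun j : Fin N => t j.succ - t 0) *
        lagrangeD (fun j : Fin N => t j.succ)).mulVec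
        (fun j : Fin N => (t j.succ - t 0) ^ m) =
      (m : ℝ) • fun j : Fin N => (t j.succ - t 0) ^ m := by
  set u : Fin N → ℝ := fun j => t j.succ with hu_def
  have hu : Function.Injective u :=
    (ht.comp (Fin.strictMono_succ)).injective
  have hmN : m < N := by omega
  funext j
  have key : ∑ k, lagrangeD u j k * (u k - t 0) ^ m = (m : ℝ) * (u j - t 0) ^ (m - 1) := by
    rw [← deriv_eval u hu (t 0) m hmN j]
    refine Finset.sum_congr rfl fun k _ => ?_
    rw [eval_derivative_basis u hu j k, mul_comm]
  rw [← Matrix.mulVec_mulVec, Matrix.mulVec_diagonal]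
  have hDv : (lagrangeD u *ᵥ fun j : Fin N => (t j.succ - t 0) ^ m) j
      = (m : ℝ) * (u j - t 0) ^ (m - 1) := by
    show ∑ k, lagrangeD u j k * (t k.succ - t 0) ^ m = _
    exact key
  rw [hDv, Pi.smul_apply, smul_eq_mul]
  show (u j - t 0) * ((m : ℝ) * (u j - t 0) ^ (m - 1)) = (m : ℝ) * (u j - t 0) ^ m
  rcases Nat.eq_zero_or_pos m with hm0 | hm0
  · simp [hm0]
  · rw [← mul_assoc, mul_comm (u j - t 0) (m : ℝ), mul_assoc]
    congr 1
    rw [← pow_succ']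
    congr 1
    omega
end

section
/- Let t_0 < t_1 < ... < t_N be distinct real numbers, N ≥ 1, let D be the trailing N×N submatrix of the Lagrange differentiation matrix on t_0,...,t_N (deleting row and column 0), and let T = diag(t_1,...,t_N). Then the matrix (T - t_0 I_N) D has eigenvalues exactly 1, 2, ..., N (each simple), and its determinant equals N!. -/
open Finset Matrix Polynomial

lemma derivative_finset_prod {ι : Type*} [DecidableEq ι] {s : Finset ι} {f : ι → ℝ[X]} :
    derivative (∏ i ∈ s, f i) = ∑ i ∈ s, (∏ j ∈ s.erase i, f j) * derivative (f i) := by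
  classical
  induction s using Finset.induction_on with
  | empty => simp
  | insert a s hi ih =>
    rw [Finset.prod_insert hi, derivative_mul, Finset.sum_insert hi, ih,
      Finset.erase_insert hi, Finset.mul_sum]
    congr 1
    · ring
    · refine Finset.sum_congr rfl fun j hj => ?_
      rw [Finset.erase_insert_of_ne (fun h => hi (by rw [h]; exact hj)) ,
        Finset.prod_insert (fun h => hi (Finset.mem_of_mem_erase h))]
      ring


lemma deriv_basisDivisor (x y : ℝ) :
    (Lagrange.basisDivisor x y).derivative = Polynomial.C (x - y)⁻¹ := by
  simp [Lagrange.basisDivisor]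

lemma deriv_basis_eval {ι : Type*} [Fintype ι] [DecidableEq ι] {t : ι → ℝ}
    (ht : Function.Injective t) (a k : ι) :
    ((Lagrange.basis Finset.univ t k).derivative).eval (t a) = lagrangeD t a k := by
  have hsub : ∀ {i j : ι}, i ≠ j → t i - t j ≠ 0 := fun h => sub_ne_zero.mpr (fun he => h (ht he))
  rw [Lagrange.basis, derivative_finset_prod]
  rw [eval_finset_sum]
  by_cases hak : a = k
  · subst hak
    simp only [lagrangeD, Matrix.of_apply, if_pos rfl]
    refine Finset.sum_congr rfl fun i hi => ?_
    have hia : i ≠ a := (Finset.mem_erase.mp hi).1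
    rw [deriv_basisDivisor, eval_mul, eval_C, eval_prod]
    rw [Finset.prod_eq_one, one_mul]
    intro j hj
    have hja : j ≠ a := (Finset.mem_erase.mp (Finset.mem_of_mem_erase hj)).1
    rw [Lagrange.basisDivisor, eval_mul, eval_C, eval_sub, eval_X, eval_C]
    field_simp [hsub (Ne.symm hja)]
  · -- only i = a term survives
    rw [Finset.sum_eq_single a]
    · rw [deriv_basisDivisor, eval_mul, eval_C, eval_prod]
      simp only [lagrangeD, Matrix.of_apply, if_neg hak]
      have hka : k ≠ a := Ne.symm hak
      -- rewrite each factor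
      have hfac : ∀ j ∈ (Finset.univ.erase k).erase a,
          (Lagrange.basisDivisor (t k) (t j)).eval (t a) = (t k - t j)⁻¹ * (t a - t j) := by
        intro j hj
        rw [Lagrange.basisDivisor, eval_mul, eval_C, eval_sub, eval_X, eval_C]
      rw [Finset.prod_congr rfl hfac]
      rw [Finset.prod_mul_distrib]
      -- RHS manipulation
      have hcomm : (Finset.univ.erase a).erase k = (Finset.univ.erase k).erase a :=
        Finset.erase_right_comm
      set A := ∏ j ∈ (Finset.univ.erase k).erase a, (t a - t j) with hA
      set B := ∏ j ∈ (Finset.univ.erase k).erase a, (t k - t j) with hB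
      have hR1 : (∏ l ∈ Finset.univ.erase a, (t a - t l)) = (t a - t k) * A := by
        rw [hA, ← hcomm,
          ← Finset.mul_prod_erase _ _ (Finset.mem_erase.mpr ⟨hka, Finset.mem_univ k⟩)]
      have hR2 : (∏ l ∈ Finset.univ.erase k, (t k - t l)) = (t k - t a) * B := by
        rw [hB,
          ← Finset.mul_prod_erase _ _ (Finset.mem_erase.mpr ⟨hak, Finset.mem_univ a⟩)]
      rw [hR1, hR2]
      have hBinv : ∏ j ∈ (Finset.univ.erase k).erase a, (t k - t j)⁻¹ = B⁻¹ := by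
        rw [hB, ← Finset.prod_inv_distrib]
      rw [hBinv]
      have hBne : B ≠ 0 := Finset.prod_ne_zero_iff.mpr fun j hj =>
        hsub (Finset.mem_erase.mp (Finset.mem_of_mem_erase hj)).1.symm
      have hak' : t a - t k ≠ 0 := hsub hak
      have hka' : t k - t a ≠ 0 := hsub hka
      field_simp
    · intro i hi hia
      have hka : k ≠ a := Ne.symm hak
      rw [eval_mul]
      have : (∏ j ∈ (Finset.univ.erase k).erase i, Lagrange.basisDivisor (t k) (t j)).eval (t a)
          = 0 := by
        rw [eval_prod]
        refine Finset.prod_eq_zero (i := a) ?_ ?_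
        · exact Finset.mem_erase.mpr ⟨Ne.symm hia, Finset.mem_erase.mpr ⟨hak, Finset.mem_univ a⟩⟩
        · exact Lagrange.eval_basisDivisor_right
      rw [this, zero_mul]
    · intro h
      exact absurd (Finset.mem_erase.mpr ⟨hak, Finset.mem_univ a⟩) h

lemma key_sum {N : ℕ} {t : Fin (N + 1) → ℝ} (ht : Function.Injective t)
    (a : Fin (N + 1)) (m : ℕ) (hm : m < N) :
    ∑ k : Fin (N + 1), lagrangeD t a k * (t k - t 0) ^ (m + 1)
      = ((m : ℝ) + 1) * (t a - t 0) ^ m := by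
  have hinj : Set.InjOn t (Finset.univ : Finset (Fin (N + 1))) := fun x _ y _ h => ht h
  set p : Polynomial ℝ := (Polynomial.X - Polynomial.C (t 0)) ^ (m + 1) with hp
  have hdeg : p.degree < (Finset.univ : Finset (Fin (N + 1))).card := by
    rw [hp, degree_pow, degree_X_sub_C, Finset.card_univ, Fintype.card_fin]
    simp only [nsmul_eq_mul, mul_one]
    exact_mod_cast Nat.succ_lt_succ hm
  have hip := Lagrange.eq_interpolate hinj hdeg
  have h := congrArg (fun q => Polynomial.eval (t a) q.derivative) hip
  simp only [Lagrange.interpolate_apply] at h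
  rw [derivative_sum] at h
  rw [eval_finset_sum] at h
  have hterm : ∀ k : Fin (N + 1),
      Polynomial.eval (t a) (derivative (Polynomial.C (p.eval (t k)) * Lagrange.basis Finset.univ t k))
        = (t k - t 0) ^ (m + 1) * lagrangeD t a k := by
    intro k
    rw [derivative_C_mul, eval_mul, eval_C, deriv_basis_eval ht a k, hp]
    simp
  rw [Finset.sum_congr rfl fun k _ => hterm k] at h
  have hL : Polynomial.eval (t a) p.derivative = ((m : ℝ) + 1) * (t a - t 0) ^ m := by
    rw [hp, derivative_pow, derivative_sub, derivative_X, derivative_C, sub_zero, mul_one]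
    simp [Nat.add_sub_cancel]
  rw [hL] at h
  rw [h]
  exact Finset.sum_congr rfl fun k _ => mul_comm _ _

lemma charpoly_conj_aux {n : ℕ} (P A : Matrix (Fin n) (Fin n) ℝ) [Invertible P] :
    (P * A * ⅟P).charpoly = A.charpoly := by
  have hC := Polynomial.C (R := ℝ)
  let f : ℝ →+* Polynomial ℝ := Polynomial.C
  have hmul : ∀ X Y : Matrix (Fin n) (Fin n) ℝ, (X * Y).map f = X.map f * Y.map f :=
    fun X Y => Matrix.map_mul
  have hone : ((1 : Matrix (Fin n) (Fin n) ℝ)).map f = 1 := Matrix.map_one f (map_zero f) (map_one f)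
  have hPP : (P.map f) * ((⅟P).map f) = 1 := by rw [← hmul, mul_invOf_self, hone]
  have hPP' : ((⅟P).map f) * (P.map f) = 1 := by rw [← hmul, invOf_mul_self, hone]
  have hchar : Matrix.charmatrix (P * A * ⅟P) = (P.map f) * Matrix.charmatrix A * ((⅟P).map f) := by
    rw [Matrix.charmatrix, Matrix.charmatrix]
    rw [mul_sub, sub_mul]
    have hsc : ∀ M : Matrix (Fin n) (Fin n) (Polynomial ℝ),
        (Matrix.scalar (Fin n) Polynomial.X) * M = M * Matrix.scalar (Fin n) Polynomial.X :=
      fun M => Matrix.scalar_commute _ (fun r => Commute.all _ r) M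
    congr 1
    · rw [← hsc (P.map f), mul_assoc, hPP, mul_one]
    · simp only [RingHom.mapMatrix_apply]
      rw [hmul, hmul]
  rw [Matrix.charpoly, hchar, Matrix.det_mul, Matrix.det_mul, Matrix.charpoly]
  rw [mul_comm ((P.map f).det), mul_assoc, ← Matrix.det_mul, hPP, Matrix.det_one, mul_one]

lemma charpoly_diagonal {n : ℕ} (d : Fin n → ℝ) :
    (Matrix.diagonal d).charpoly = ∏ i : Fin n, (Polynomial.X - Polynomial.C (d i)) := by
  have : Matrix.charmatrix (Matrix.diagonal d)
      = Matrix.diagonal fun i => Polynomial.X - Polynomial.C (d i) := by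
    apply Matrix.ext
    intro i j
    by_cases h : i = j
    · subst h; rw [Matrix.charmatrix_apply_eq, Matrix.diagonal_apply_eq,
        Matrix.diagonal_apply_eq]
    · rw [Matrix.charmatrix_apply_ne _ _ _ h, Matrix.diagonal_apply_ne _ h,
        Matrix.diagonal_apply_ne _ h, map_zero, neg_zero]
  rw [Matrix.charpoly, this, Matrix.det_diagonal]


/-- `(T - t₀ I) D` has characteristic polynomial `∏_{m=1}^N (X - m)` (i.e. eigenvalues
exactly `1, …, N`, each simple) and determinant `N!`. -/
theorem stmt_6 (N : ℕ) (hN : 1 ≤ N) (t : Fin (N + 1) → ℝ) (ht : StrictMono t) :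
    ((Matrix.diagonal fun j : Fin N => t j.succ - t 0) *
          (lagrangeD t).submatrix Fin.succ Fin.succ).charpoly =
        ∏ m ∈ Finset.range N, (Polynomial.X - Polynomial.C ((m : ℝ) + 1)) ∧
      ((Matrix.diagonal fun j : Fin N => t j.succ - t 0) *
          (lagrangeD t).submatrix Fin.succ Fin.succ).det = (N.factorial : ℝ) := by
  have htinj : Function.Injective t := ht.injective
  set c : Fin N → ℝ := fun j => t j.succ - t 0 with hc
  have hc0 : ∀ j, c j ≠ 0 := fun j =>
    sub_ne_zero.mpr (fun h => (Fin.succ_ne_zero j) (htinj h))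
  have hcmono : StrictMono c := fun i j hij =>
    sub_lt_sub_right (ht (Fin.succ_lt_succ_iff.mpr hij)) _
  set M := (Matrix.diagonal c) * (lagrangeD t).submatrix Fin.succ Fin.succ with hM
  set P : Matrix (Fin N) (Fin N) ℝ :=
    Matrix.of fun j m => c j ^ ((m : ℕ) + 1) with hP
  set Δ : Matrix (Fin N) (Fin N) ℝ :=
    Matrix.diagonal fun m : Fin N => ((m : ℕ) : ℝ) + 1 with hΔ
  -- P is invertible
  have hPfact : P = Matrix.diagonal c * Matrix.vandermonde c := by
    apply Matrix.ext; intro j m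
    rw [hP, Matrix.diagonal_mul, Matrix.vandermonde_apply, Matrix.of_apply, pow_succ']
  have hdetP : P.det ≠ 0 := by
    rw [hPfact, Matrix.det_mul, Matrix.det_diagonal, Matrix.det_vandermonde]
    refine mul_ne_zero (Finset.prod_ne_zero_iff.mpr fun j _ => hc0 j) ?_
    refine Finset.prod_ne_zero_iff.mpr fun i _ => Finset.prod_ne_zero_iff.mpr fun j hj => ?_
    exact sub_ne_zero.mpr (fun h => (Finset.mem_Ioi.mp hj).ne' (hcmono.injective h))
  have : Invertible P := Matrix.invertibleOfIsUnitDet P (isUnit_iff_ne_zero.mpr hdetP)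
  -- eigen relation
  have hMP : M * P = P * Δ := by
    apply Matrix.ext; intro j m
    rw [hM, Matrix.mul_assoc, Matrix.diagonal_mul, Matrix.mul_diagonal]
    have hsum : ∑ k : Fin N, (lagrangeD t).submatrix Fin.succ Fin.succ j k * P k m
        = ((m : ℕ) + 1 : ℝ) * (t j.succ - t 0) ^ (m : ℕ) := by
      have hfull := key_sum htinj j.succ (m : ℕ) m.isLt
      rw [Fin.sum_univ_succ] at hfull
      simp only [sub_self, zero_pow (Nat.succ_ne_zero (m : ℕ)), mul_zero, zero_add] at hfull
      rw [← hfull]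
      exact Finset.sum_congr rfl fun k _ => rfl
    rw [Matrix.mul_apply]
    rw [hsum]
    rw [hP, Matrix.of_apply, hc]
    push_cast
    ring
  have hMform : M = P * Δ * ⅟P := by
    rw [← hMP, Matrix.mul_assoc, mul_invOf_self, Matrix.mul_one]
  have hchar : M.charpoly = ∏ m ∈ Finset.range N, (Polynomial.X - Polynomial.C ((m : ℝ) + 1)) := by
    rw [hMform, charpoly_conj_aux, hΔ, charpoly_diagonal]
    exact Fin.prod_univ_eq_prod_range (fun m => Polynomial.X - Polynomial.C ((m : ℝ) + 1)) N
  refine ⟨hchar, ?_⟩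
  have hdet : M.det = Δ.det := by
    rw [hMform, Matrix.det_mul, Matrix.det_mul, mul_comm, ← mul_assoc, ← Matrix.det_mul,
      invOf_mul_self, Matrix.det_one, one_mul]
  rw [hdet, hΔ, Matrix.det_diagonal]
  rw [Fin.prod_univ_eq_prod_range (fun m => ((m : ℕ) : ℝ) + 1) N]
  rw [← Finset.prod_range_add_one_eq_factorial]
  push_cast
  rfl
end

section
/- Let N ≥ 1, h > 0, and consider equispaced nodes t_j = t_0 + j h, j = 0, 1, ..., N. Let d_j = 𝒟_{j0} for j = 1, ..., N be the first-column entries (excluding the (0,0) entry) of the Lagrange differentiation matrix 𝒟 on these nodes. Then max_{1 ≤ j ≤ N} |d_j| = 1/(N h), and this maximum is attained at j = 1 and j = N. -/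
open Finset Matrix

lemma fact_prod : ∀ n : ℕ, ∏ i ∈ Finset.range n, (n - i) = n.factorial
  | 0 => by simp
  | n + 1 => by
    rw [Finset.prod_range_succ']
    simp only [Nat.add_sub_cancel, Nat.succ_sub_succ, Nat.sub_zero]
    rw [fact_prod n, Nat.factorial_succ, Nat.mul_comm]

lemma prod_abs_range (N j : ℕ) (hj : j ≤ N) :
    ∏ i ∈ (Finset.range (N+1)).erase j, |(j:ℝ) - i| =
      ((Nat.factorial j * Nat.factorial (N - j) : ℕ) : ℝ) := by
  have h1 : (Finset.range (N+1)).erase j = Finset.range j ∪ Finset.Ico (j+1) (N+1) := by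
    ext i
    simp only [Finset.mem_erase, Finset.mem_range, Finset.mem_union, Finset.mem_Ico]
    omega
  have hdisj : Disjoint (Finset.range j) (Finset.Ico (j+1) (N+1)) := by
    rw [Finset.disjoint_left]
    intro a ha hb
    simp only [Finset.mem_range] at ha
    simp only [Finset.mem_Ico] at hb
    omega
  rw [h1, Finset.prod_union hdisj]
  have h2 : ∏ i ∈ Finset.range j, |(j:ℝ) - i| = ((Nat.factorial j : ℕ) : ℝ) := by
    rw [← fact_prod j, Nat.cast_prod]
    refine Finset.prod_congr rfl fun i hi => ?_
    simp only [Finset.mem_range] at hi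
    rw [Nat.cast_sub hi.le,
      abs_of_nonneg (sub_nonneg.mpr (by exact_mod_cast hi.le))]
  have h3 : ∏ i ∈ Finset.Ico (j+1) (N+1), |(j:ℝ) - i| =
      ((Nat.factorial (N - j) : ℕ) : ℝ) := by
    have : ∏ i ∈ Finset.Ico (j+1) (N+1), |(j:ℝ) - i| =
        ∏ i ∈ Finset.Ico (j+1) (N+1), ((i - j : ℕ) : ℝ) := by
      refine Finset.prod_congr rfl fun i hi => ?_
      simp only [Finset.mem_Ico] at hi
      have hji : j ≤ i := by omega
      rw [Nat.cast_sub hji, abs_sub_comm,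
        abs_of_nonneg (sub_nonneg.mpr (by exact_mod_cast hji))]
    rw [this, ← Nat.cast_prod]
    congr 1
    rw [Finset.prod_Ico_eq_prod_range]
    have hrw : N + 1 - (j + 1) = N - j := by omega
    rw [hrw]
    rw [← Finset.prod_range_add_one_eq_factorial (N - j)]
    refine Finset.prod_congr rfl fun i _ => by omega
  rw [h2, h3, Nat.cast_mul]

lemma prod_abs_fin (N : ℕ) (x : Fin (N+1)) :
    ∏ l ∈ (Finset.univ : Finset (Fin (N+1))).erase x, |((x:ℕ):ℝ) - ((l:ℕ):ℝ)| =
      ((Nat.factorial (x:ℕ) * Nat.factorial (N - (x:ℕ)) : ℕ) : ℝ) := by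
  rw [← prod_abs_range N (x:ℕ) (Nat.lt_succ_iff.mp x.isLt)]
  have himg : ((Finset.univ : Finset (Fin (N+1))).erase x).image Fin.val =
      (Finset.range (N+1)).erase (x:ℕ) := by
    ext i
    simp only [Finset.mem_image, Finset.mem_erase, Finset.mem_univ, and_true,
      Finset.mem_range]
    constructor
    · rintro ⟨a, ha, rfl⟩
      exact ⟨fun hc => ha (Fin.ext hc), a.isLt⟩
    · rintro ⟨hne, hi⟩
      exact ⟨⟨i, hi⟩, fun hc => hne (congrArg Fin.val hc), rfl⟩
  rw [← himg, Finset.prod_image (fun a _ b _ hab => Fin.val_injective hab)]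

lemma abs_entry (N : ℕ) (hN : 1 ≤ N) (t₀ h : ℝ) (hh : 0 < h)
    (t : Fin (N + 1) → ℝ) (ht : ∀ j, t j = t₀ + (j : ℕ) * h)
    (j : Fin (N + 1)) (hj : j ≠ 0) :
    |lagrangeD t j 0| =
      ((Nat.factorial (j:ℕ) * Nat.factorial (N - (j:ℕ)) : ℕ) : ℝ) /
        ((j:ℕ) * Nat.factorial N * h) := by
  have htd : ∀ a b : Fin (N+1), t a - t b = (((a:ℕ):ℝ) - ((b:ℕ):ℝ)) * h := by
    intro a b; rw [ht a, ht b]; ring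
  have hcard : ∀ x : Fin (N+1), ((Finset.univ : Finset (Fin (N+1))).erase x).card = N := by
    intro x
    rw [Finset.card_erase_of_mem (Finset.mem_univ x), Finset.card_univ, Fintype.card_fin]
    rfl
  have hprod : ∀ x : Fin (N+1),
      |∏ l ∈ (Finset.univ : Finset (Fin (N+1))).erase x, (t x - t l)| =
        ((Nat.factorial (x:ℕ) * Nat.factorial (N - (x:ℕ)) : ℕ) : ℝ) * h ^ N := by
    intro x
    rw [Finset.abs_prod]
    calc ∏ l ∈ (Finset.univ : Finset (Fin (N+1))).erase x, |t x - t l|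
        = ∏ l ∈ (Finset.univ : Finset (Fin (N+1))).erase x,
            (|((x:ℕ):ℝ) - ((l:ℕ):ℝ)| * h) := by
          refine Finset.prod_congr rfl fun l _ => ?_
          rw [htd, abs_mul, abs_of_pos hh]
      _ = (∏ l ∈ (Finset.univ : Finset (Fin (N+1))).erase x,
            |((x:ℕ):ℝ) - ((l:ℕ):ℝ)|) * h ^ ((Finset.univ : Finset (Fin (N+1))).erase x).card := by
          rw [Finset.prod_mul_distrib, Finset.prod_const]
      _ = _ := by rw [prod_abs_fin, hcard]
  have hjv : 1 ≤ (j:ℕ) := by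
    rcases Nat.pos_of_ne_zero (n := (j:ℕ)) (fun hc => hj (Fin.ext (by simpa using hc))) with h'
    exact h'
  have hentry : lagrangeD t j 0 =
      (∏ l ∈ Finset.univ.erase j, (t j - t l)) /
        ((t j - t 0) * ∏ l ∈ Finset.univ.erase (0 : Fin (N+1)), (t 0 - t l)) := by
    simp [lagrangeD, hj]
  rw [hentry, abs_div, abs_mul, hprod j, hprod 0]
  have ht0 : |t j - t 0| = (j:ℕ) * h := by
    rw [htd]
    simp only [Fin.val_zero, Nat.cast_zero, sub_zero]
    rw [abs_mul, abs_of_pos hh, abs_of_nonneg (by positivity)]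
  rw [ht0]
  simp only [Fin.val_zero, Nat.factorial_zero, Nat.sub_zero, one_mul]
  rw [div_eq_div_iff (by positivity) (by positivity)]
  ring

theorem stmt_9_aux (N : ℕ) (hN : 1 ≤ N) (t₀ h : ℝ) (hh : 0 < h)
    (t : Fin (N + 1) → ℝ) (ht : ∀ j, t j = t₀ + (j : ℕ) * h) :
    (∀ j : Fin (N + 1), j ≠ 0 → |lagrangeD t j 0| ≤ 1 / (N * h)) ∧
      |lagrangeD t 1 0| = 1 / (N * h) ∧
      |lagrangeD t (Fin.last N) 0| = 1 / (N * h) := by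
  have hNpos : (0:ℝ) < N := by exact_mod_cast hN
  refine ⟨?_, ?_, ?_⟩
  · intro j hj
    rw [abs_entry N hN t₀ h hh t ht j hj]
    set m := (j:ℕ) with hm
    have hm1 : 1 ≤ m := Nat.pos_of_ne_zero (fun hc => hj (Fin.ext (by simpa [hm] using hc)))
    have hmN : m ≤ N := Nat.lt_succ_iff.mp j.isLt
    rw [div_le_div_iff₀ (by positivity) (by positivity)]
    have hnat : N * (Nat.factorial m * Nat.factorial (N - m)) ≤ m * Nat.factorial N := by
      have hdvd : Nat.factorial (m - 1) * Nat.factorial (N - m) ∣ Nat.factorial (N - 1) := by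
        have : (m - 1) + (N - m) = N - 1 := by omega
        calc Nat.factorial (m - 1) * Nat.factorial (N - m)
            ∣ Nat.factorial ((m - 1) + (N - m)) :=
              Nat.factorial_mul_factorial_dvd_factorial_add _ _
          _ = Nat.factorial (N - 1) := by rw [this]
      have hle : Nat.factorial (m - 1) * Nat.factorial (N - m) ≤ Nat.factorial (N - 1) :=
        Nat.le_of_dvd (Nat.factorial_pos _) hdvd
      have hmfac : Nat.factorial m = m * Nat.factorial (m - 1) := by
        conv_lhs => rw [show m = (m - 1) + 1 by omega]
        rw [Nat.factorial_succ]
        congr 1; omega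
      have hNfac : Nat.factorial N = N * Nat.factorial (N - 1) := by
        conv_lhs => rw [show N = (N - 1) + 1 by omega]
        rw [Nat.factorial_succ]
        congr 1; omega
      calc N * (Nat.factorial m * Nat.factorial (N - m))
          = (N * m) * (Nat.factorial (m - 1) * Nat.factorial (N - m)) := by
            rw [hmfac]; ring
        _ ≤ (N * m) * Nat.factorial (N - 1) := Nat.mul_le_mul_left _ hle
        _ = m * Nat.factorial N := by rw [hNfac]; ring
    calc ((Nat.factorial m * Nat.factorial (N - m) : ℕ) : ℝ) * (N * h)
        = ((N * (Nat.factorial m * Nat.factorial (N - m)) : ℕ) : ℝ) * h := by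
          push_cast; ring
      _ ≤ ((m * Nat.factorial N : ℕ) : ℝ) * h := by
          apply mul_le_mul_of_nonneg_right _ hh.le
          exact_mod_cast hnat
      _ = 1 * ((m:ℝ) * Nat.factorial N * h) := by push_cast; ring
  · have h1ne : (1 : Fin (N+1)) ≠ 0 := by
      intro hc
      have := congrArg Fin.val hc
      rw [Fin.val_one', Nat.mod_eq_of_lt (by omega)] at this
      simp at this
    rw [abs_entry N hN t₀ h hh t ht 1 h1ne]
    have hv : ((1 : Fin (N+1)) : ℕ) = 1 := by
      rw [Fin.val_one', Nat.mod_eq_of_lt (by omega)]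
    rw [hv]
    have hNfac : Nat.factorial N = N * Nat.factorial (N - 1) := by
      conv_lhs => rw [show N = (N - 1) + 1 by omega]
      rw [Nat.factorial_succ]; congr 1; omega
    rw [Nat.factorial_one, one_mul, hNfac]
    have hfpos : (0:ℝ) < (Nat.factorial (N-1) : ℝ) := by exact_mod_cast Nat.factorial_pos _
    rw [div_eq_div_iff (by positivity) (by positivity)]
    push_cast
    ring
  · have hlne : (Fin.last N) ≠ (0 : Fin (N+1)) := by
      intro hc
      have := congrArg Fin.val hc
      simp [Fin.val_last] at this
      omega
    rw [abs_entry N hN t₀ h hh t ht (Fin.last N) hlne]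
    rw [Fin.val_last, Nat.sub_self, Nat.factorial_zero, Nat.mul_one]
    have hfpos : (0:ℝ) < (Nat.factorial N : ℝ) := by exact_mod_cast Nat.factorial_pos _
    rw [div_eq_div_iff (by positivity) (by positivity)]
    ring

/-- For equispaced nodes the first-column entries of the differentiation matrix are
bounded in absolute value by `1/(N h)`, with the maximum attained at `j = 1` and `j = N`. -/
theorem stmt_9 (N : ℕ) (hN : 1 ≤ N) (t₀ h : ℝ) (hh : 0 < h)
    (t : Fin (N + 1) → ℝ) (ht : ∀ j, t j = t₀ + (j : ℕ) * h) :
    (∀ j : Fin (N + 1), j ≠ 0 → |lagrangeD t j 0| ≤ 1 / (N * h)) ∧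
      |lagrangeD t 1 0| = 1 / (N * h) ∧
      |lagrangeD t (Fin.last N) 0| = 1 / (N * h) := by
  exact stmt_9_aux N hN t₀ h hh t ht
end
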